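/- arXiv:1211.2980 — 8 statements merged into one kernel-verified Lean document; each statement's English description precedes it below -/
import Mathlib

section
/- For every finite set system S ⊆ {0,1}^X and every partition of X into X' and X'', exactly one of the following holds: (1) S shatters X', or (2) the complement of S (in {0,1}^X) strongly shatters X''. -/
open Finset

variable {α : Type*} [Fintype α] [DecidableEq α]

/-- `S` shatters `Y`: every assignment on `Y` extends to a member of `S`. -/
def shatters (S : Finset (α → Bool)) (Y : Finset α) : Prop :=
  ∀ f : α → Bool, ∃ s ∈ S, ∀ a ∈ Y, s a = f a

/-- `S` strongly shatters `Y`: some assignment off `Y` has all its `Y`-extensions in `S`. -/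
def stronglyShatters (S : Finset (α → Bool)) (Y : Finset α) : Prop :=
  ∃ g : α → Bool, ∀ f : α → Bool, (fun a => if a ∈ Y then f a else g a) ∈ S

open Classical in
/-- The family of shattered subsets. -/
noncomputable def strF (S : Finset (α → Bool)) : Finset (Finset α) :=
  Finset.univ.filter (fun Y => shatters S Y)

open Classical in
/-- The family of strongly shattered subsets. -/
noncomputable def sstrF (S : Finset (α → Bool)) : Finset (Finset α) :=
  Finset.univ.filter (fun Y => stronglyShatters S Y)

/-- Shattering-extremal: shattered = strongly shattered. -/
def SE (S : Finset (α → Bool)) : Prop :=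
  ∀ Y : Finset α, shatters S Y ↔ stronglyShatters S Y

theorem stmt0 (S : Finset (α → Bool)) (X' : Finset α) :
    Xor' (shatters S X') (stronglyShatters Sᶜ X'ᶜ) := by
  have key : stronglyShatters Sᶜ X'ᶜ ↔ ¬ shatters S X' := by
    constructor
    · rintro ⟨g, hg⟩ hsh
      obtain ⟨s, hs, hagree⟩ := hsh g
      have heq : (fun a => if a ∈ X'ᶜ then s a else g a) = s := by
        funext a
        by_cases h : a ∈ X'
        · simp [h, hagree a h]
        · simp [h]
      have h2 := hg s
      rw [heq, Finset.mem_compl] at h2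
      exact h2 hs
    · intro h
      simp only [shatters] at h
      push_neg at h
      obtain ⟨f, hf⟩ := h
      refine ⟨f, fun h' => ?_⟩
      simp only [Finset.mem_compl]
      intro hmem
      obtain ⟨a, ha, hne⟩ := hf _ hmem
      simp [ha] at hne
  by_cases hP : shatters S X'
  · exact Or.inl ⟨hP, fun hQ => (key.mp hQ) hP⟩
  · exact Or.inr ⟨key.mpr hP, hP⟩
end

section
/- For every finite set X and S ⊆ {0,1}^X, |str(S)| + |sstr({0,1}^X \ S)| = 2^{|X|}. -/
open Finset

variable {α : Type*} [Fintype α] [DecidableEq α]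

lemma key_duality (S : Finset (α → Bool)) (Y : Finset α) :
    shatters S Y ↔ ¬ stronglyShatters Sᶜ Yᶜ := by
  constructor
  · rintro hs ⟨g, hg⟩
    obtain ⟨s, hsS, hag⟩ := hs g
    have := hg s
    have heq : (fun a => if a ∈ Yᶜ then s a else g a) = s := by
      funext a
      by_cases ha : a ∈ Y
      · simp [ha, (hag a ha).symm]
      · simp [ha]
    rw [heq, Finset.mem_compl] at this
    exact this hsS
  · intro hn f
    unfold stronglyShatters at hn
    push_neg at hn
    obtain ⟨f', hf'⟩ := hn f
    rw [Finset.mem_compl, not_not] at hf'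
    refine ⟨_, hf', fun a ha => ?_⟩
    simp [ha]

theorem stmt2 (S : Finset (α → Bool)) :
    (strF S).card + (sstrF Sᶜ).card = 2 ^ Fintype.card α := by
  classical
  have hinj : Function.Injective (fun Y : Finset α => Yᶜ) := fun a b h => by
    simpa using congrArg (·ᶜ) h
  have himg : (sstrF Sᶜ).card = ((sstrF Sᶜ).image (fun Y => Yᶜ)).card :=
    (Finset.card_image_of_injective _ hinj).symm
  have hcompl : strF S = ((sstrF Sᶜ).image (fun Y => Yᶜ))ᶜ := by
    ext Y
    simp only [strF, sstrF, Finset.mem_compl, Finset.mem_image, Finset.mem_filter,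
      Finset.mem_univ, true_and]
    rw [key_duality]
    constructor
    · rintro h ⟨Z, hZ, rfl⟩
      rw [compl_compl] at h
      exact h hZ
    · intro h hY
      exact h ⟨Yᶜ, hY, compl_compl Y⟩
  rw [hcompl, himg]
  rw [Finset.card_compl]
  have hle : ((sstrF Sᶜ).image (fun Y : Finset α => Yᶜ)).card ≤ Fintype.card (Finset α) :=
    Finset.card_le_univ _
  rw [Fintype.card_finset] at *
  omega
end

section
/- (Sandwich theorem) For every finite set X and S ⊆ {0,1}^X: |sstr(S)| ≤ |S| ≤ |str(S)|. -/
open Finset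

variable {α : Type*} [Fintype α] [DecidableEq α]

lemma mem_strF {S : Finset (α → Bool)} {Y : Finset α} : Y ∈ strF S ↔ shatters S Y := by
  classical
  simp [strF]

lemma mem_sstrF {S : Finset (α → Bool)} {Y : Finset α} :
    Y ∈ sstrF S ↔ stronglyShatters S Y := by
  classical
  simp [sstrF]

lemma shatters_mono {S T : Finset (α → Bool)} {Y : Finset α} (hST : S ⊆ T)
    (h : shatters S Y) : shatters T Y := by
  intro f
  obtain ⟨s, hs, ha⟩ := h f
  exact ⟨s, hST hs, ha⟩

lemma notMem_of_shatters_filter {S : Finset (α → Bool)} {x : α} {Y : Finset α} {b : Bool}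
    (h : shatters (S.filter fun s => s x = b) Y) : x ∉ Y := by
  intro hx
  obtain ⟨s, hs, ha⟩ := h (fun _ => !b)
  have h1 := (Finset.mem_filter.1 hs).2
  have h2 := ha x hx
  rw [h1] at h2
  cases b <;> simp at h2

lemma shatters_insert {S : Finset (α → Bool)} {x : α} {Y : Finset α}
    (h0 : shatters (S.filter fun s => s x = false) Y)
    (h1 : shatters (S.filter fun s => s x = true) Y) :
    shatters S (insert x Y) := by
  intro f
  cases hfx : f x with
  | false =>
    obtain ⟨s, hs, ha⟩ := h0 f
    refine ⟨s, (Finset.mem_filter.1 hs).1, fun a haY => ?_⟩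
    rcases Finset.mem_insert.1 haY with rfl | haY
    · rw [(Finset.mem_filter.1 hs).2, hfx]
    · exact ha a haY
  | true =>
    obtain ⟨s, hs, ha⟩ := h1 f
    refine ⟨s, (Finset.mem_filter.1 hs).1, fun a haY => ?_⟩
    rcases Finset.mem_insert.1 haY with rfl | haY
    · rw [(Finset.mem_filter.1 hs).2, hfx]
    · exact ha a haY

lemma sstr_filter_of_notMem {S : Finset (α → Bool)} {x : α} {Y : Finset α}
    (h : stronglyShatters S Y) (hx : x ∉ Y) :
    stronglyShatters (S.filter fun s => s x = false) Y ∨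
    stronglyShatters (S.filter fun s => s x = true) Y := by
  obtain ⟨g, hg⟩ := h
  cases hgx : g x with
  | false =>
    exact Or.inl ⟨g, fun f => Finset.mem_filter.2 ⟨hg f, by simp [hx, hgx]⟩⟩
  | true =>
    exact Or.inr ⟨g, fun f => Finset.mem_filter.2 ⟨hg f, by simp [hx, hgx]⟩⟩

lemma sstr_erase {S : Finset (α → Bool)} {x : α} {Y : Finset α}
    (h : stronglyShatters S Y) (hx : x ∈ Y) (b : Bool) :
    stronglyShatters (S.filter fun s => s x = b) (Y.erase x) := by
  obtain ⟨g, hg⟩ := h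
  refine ⟨Function.update g x b, fun f => Finset.mem_filter.2 ⟨?_, ?_⟩⟩
  · have key : (fun a => if a ∈ Y.erase x then f a else Function.update g x b a)
        = (fun a => if a ∈ Y then Function.update f x b a else g a) := by
      funext a
      rcases eq_or_ne a x with rfl | hax
      · simp [hx]
      · by_cases haY : a ∈ Y
        · simp [Finset.mem_erase, hax, haY, Function.update_of_ne hax]
        · simp [Finset.mem_erase, hax, haY, Function.update_of_ne hax]
    rw [key]
    exact hg _
  · simp

lemma str_card_le {S : Finset (α → Bool)} (x : α) :
    (strF (S.filter fun s => s x = false)).card + (strF (S.filter fun s => s x = true)).card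
      ≤ (strF S).card := by
  classical
  set A := strF (S.filter fun s => s x = false) with hA
  set B := strF (S.filter fun s => s x = true) with hB
  have hxA : ∀ Y ∈ A, x ∉ Y := fun Y hY => notMem_of_shatters_filter (mem_strF.1 hY)
  have hxB : ∀ Y ∈ B, x ∉ Y := fun Y hY => notMem_of_shatters_filter (mem_strF.1 hY)
  have hsub : (A ∪ B) ∪ (A ∩ B).image (insert x) ⊆ strF S := by
    intro Y hY
    rcases Finset.mem_union.1 hY with h | h
    · rcases Finset.mem_union.1 h with h | h
      · exact mem_strF.2 (shatters_mono (Finset.filter_subset _ _) (mem_strF.1 h))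
      · exact mem_strF.2 (shatters_mono (Finset.filter_subset _ _) (mem_strF.1 h))
    · obtain ⟨Z, hZ, rfl⟩ := Finset.mem_image.1 h
      exact mem_strF.2 (shatters_insert (mem_strF.1 (Finset.mem_inter.1 hZ).1)
        (mem_strF.1 (Finset.mem_inter.1 hZ).2))
  have hdisj : Disjoint (A ∪ B) ((A ∩ B).image (insert x)) := by
    rw [Finset.disjoint_right]
    intro Y hY hY'
    obtain ⟨Z, _, rfl⟩ := Finset.mem_image.1 hY
    rcases Finset.mem_union.1 hY' with h | h
    · exact hxA _ h (Finset.mem_insert_self x Z)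
    · exact hxB _ h (Finset.mem_insert_self x Z)
  have himg : ((A ∩ B).image (insert x)).card = (A ∩ B).card := by
    apply Finset.card_image_of_injOn
    intro Y hY Z hZ h
    have hxY := hxA _ (Finset.mem_inter.1 hY).1
    have hxZ := hxA _ (Finset.mem_inter.1 hZ).1
    rw [← Finset.erase_insert hxY, ← Finset.erase_insert hxZ, h]
  calc A.card + B.card = (A ∪ B).card + (A ∩ B).card :=
        (Finset.card_union_add_card_inter A B).symm
    _ = ((A ∪ B) ∪ (A ∩ B).image (insert x)).card := by
        rw [Finset.card_union_of_disjoint hdisj, himg]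
    _ ≤ (strF S).card := Finset.card_le_card hsub

lemma sstr_card_le {S : Finset (α → Bool)} (x : α) :
    (sstrF S).card ≤ (sstrF (S.filter fun s => s x = false)).card
      + (sstrF (S.filter fun s => s x = true)).card := by
  classical
  set A := sstrF (S.filter fun s => s x = false) with hA
  set B := sstrF (S.filter fun s => s x = true) with hB
  have h1 : (sstrF S).filter (fun Y => x ∉ Y) ⊆ A ∪ B := by
    intro Y hY
    obtain ⟨hY, hx⟩ := Finset.mem_filter.1 hY
    rcases sstr_filter_of_notMem (mem_sstrF.1 hY) hx with h | h
    · exact Finset.mem_union_left _ (mem_sstrF.2 h)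
    · exact Finset.mem_union_right _ (mem_sstrF.2 h)
  have h2 : ((sstrF S).filter (fun Y => x ∈ Y)).image (fun Y => Y.erase x) ⊆ A ∩ B := by
    intro Y hY
    obtain ⟨Z, hZ, rfl⟩ := Finset.mem_image.1 hY
    obtain ⟨hZ1, hZ2⟩ := Finset.mem_filter.1 hZ
    exact Finset.mem_inter.2 ⟨mem_sstrF.2 (sstr_erase (mem_sstrF.1 hZ1) hZ2 false),
      mem_sstrF.2 (sstr_erase (mem_sstrF.1 hZ1) hZ2 true)⟩
  have hinj : (((sstrF S).filter (fun Y => x ∈ Y)).image (fun Y => Y.erase x)).card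
      = ((sstrF S).filter (fun Y => x ∈ Y)).card := by
    apply Finset.card_image_of_injOn
    intro Y hY Z hZ h
    have hxY := (Finset.mem_filter.1 hY).2
    have hxZ := (Finset.mem_filter.1 hZ).2
    rw [← Finset.insert_erase hxY, ← Finset.insert_erase hxZ]
    exact congrArg (insert x) h
  calc (sstrF S).card
      = ((sstrF S).filter (fun Y => x ∈ Y)).card
        + ((sstrF S).filter (fun Y => ¬ x ∈ Y)).card :=
        (Finset.card_filter_add_card_filter_not _).symm
    _ ≤ (A ∩ B).card + (A ∪ B).card := by
        refine add_le_add ?_ (Finset.card_le_card h1)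
        rw [← hinj]
        exact Finset.card_le_card h2
    _ = A.card + B.card := by
        rw [add_comm]
        exact Finset.card_union_add_card_inter A B
    _ = A.card + B.card := rfl

lemma sandwich_aux : ∀ n : ℕ, ∀ S : Finset (α → Bool), S.card ≤ n →
    (sstrF S).card ≤ S.card ∧ S.card ≤ (strF S).card := by
  intro n
  induction n with
  | zero =>
    intro S hS
    have hSe : S = ∅ := Finset.card_eq_zero.1 (Nat.le_zero.1 hS)
    subst hSe
    have : sstrF (∅ : Finset (α → Bool)) = ∅ := by
      apply Finset.eq_empty_of_forall_notMem
      intro Y hY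
      obtain ⟨g, hg⟩ := mem_sstrF.1 hY
      exact absurd (hg g) (Finset.notMem_empty _)
    simp [this]
  | succ n ih =>
    intro S hS
    by_cases hsmall : S.card ≤ n
    · exact ih S hsmall
    by_cases hex : ∃ s ∈ S, ∃ t ∈ S, s ≠ t
    · obtain ⟨s, hs, t, ht, hst⟩ := hex
      obtain ⟨x, hx⟩ : ∃ x, s x ≠ t x := by
        by_contra h
        push_neg at h
        exact hst (funext h)
      set S0 := S.filter (fun s => s x = false) with hS0def
      set S1 := S.filter (fun s => s x = true) with hS1def
      have hcard : S0.card + S1.card = S.card := by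
        have h2 : S.filter (fun u => u x = true) = S.filter (fun u => ¬ u x = false) := by
          apply Finset.filter_congr
          intro u _
          simp
        rw [hS0def, hS1def, h2]
        exact Finset.card_filter_add_card_filter_not _
      have h0ne : S0.Nonempty := by
        have : s x = false ∨ t x = false := by
          cases hsx : s x
          · exact Or.inl rfl
          · cases htx : t x
            · exact Or.inr rfl
            · exact absurd (hsx.trans htx.symm) hx
        rcases this with h | h
        · exact ⟨s, Finset.mem_filter.2 ⟨hs, h⟩⟩
        · exact ⟨t, Finset.mem_filter.2 ⟨ht, h⟩⟩
      have h1ne : S1.Nonempty := by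
        have : s x = true ∨ t x = true := by
          cases hsx : s x
          · cases htx : t x
            · exact absurd (hsx.trans htx.symm) hx
            · exact Or.inr rfl
          · exact Or.inl rfl
        rcases this with h | h
        · exact ⟨s, Finset.mem_filter.2 ⟨hs, h⟩⟩
        · exact ⟨t, Finset.mem_filter.2 ⟨ht, h⟩⟩
      have h0pos : 0 < S0.card := Finset.card_pos.2 h0ne
      have h1pos : 0 < S1.card := Finset.card_pos.2 h1ne
      have ih0 := ih S0 (by omega)
      have ih1 := ih S1 (by omega)
      constructor
      · calc (sstrF S).card ≤ (sstrF S0).card + (sstrF S1).card := sstr_card_le x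
          _ ≤ S0.card + S1.card := add_le_add ih0.1 ih1.1
          _ = S.card := hcard
      · calc S.card = S0.card + S1.card := hcard.symm
          _ ≤ (strF S0).card + (strF S1).card := add_le_add ih0.2 ih1.2
          _ ≤ (strF S).card := str_card_le x
    · push_neg at hex
      have hone : S.card ≤ 1 := Finset.card_le_one.2 (fun a ha b hb => hex a ha b hb)
      have hScard : S.card = 1 := by omega
      obtain ⟨s, rfl⟩ := Finset.card_eq_one.1 hScard
      constructor
      · rw [hScard]
        have hsub : sstrF ({s} : Finset (α → Bool)) ⊆ {∅} := by
          intro Y hY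
          obtain ⟨g, hg⟩ := mem_sstrF.1 hY
          rw [Finset.mem_singleton]
          by_contra hne
          obtain ⟨a, ha⟩ := Finset.nonempty_of_ne_empty hne
          have h1 := hg (fun _ => !(s a))
          rw [Finset.mem_singleton] at h1
          have h2 := congrFun h1 a
          simp only [ha, if_pos] at h2
          cases hsa : s a <;> rw [hsa] at h2 <;> simp at h2
        calc (sstrF ({s} : Finset (α → Bool))).card ≤ ({∅} : Finset (Finset α)).card :=
              Finset.card_le_card hsub
          _ = 1 := Finset.card_singleton _
      · rw [hScard]
        have : (∅ : Finset α) ∈ strF ({s} : Finset (α → Bool)) := by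
          refine mem_strF.2 (fun f => ⟨s, Finset.mem_singleton_self s, ?_⟩)
          intro a ha
          exact absurd ha (Finset.notMem_empty a)
        exact Finset.card_pos.2 ⟨∅, this⟩

theorem stmt3 (S : Finset (α → Bool)) :
    (sstrF S).card ≤ S.card ∧ S.card ≤ (strF S).card :=
  sandwich_aux S.card S le_rfl
end

section
/- (Sauer–Shelah lemma) For every finite set X with |X| = n and S ⊆ {0,1}^X, |S| ≤ Σ_{i=0}^{d} C(n,i), where d is the VC-dimension of S (the maximum cardinality of a shattered subset of X). -/
open Finset

variable {α : Type*} [Fintype α] [DecidableEq α]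

theorem stmt4 (S : Finset (α → Bool)) (hS : S.Nonempty) (d : ℕ)
    (hd : IsGreatest {n : ℕ | ∃ Y : Finset α, shatters S Y ∧ Y.card = n} d) :
    S.card ≤ ∑ i ∈ Finset.range (d + 1), (Fintype.card α).choose i := by
  classical
  set 𝒜 : Finset (Finset α) := S.image (fun f => univ.filter (fun a => f a = true)) with h𝒜
  have hcard : S.card = 𝒜.card := by
    rw [h𝒜, card_image_of_injective]
    intro f g hfg
    funext a
    have : (a ∈ univ.filter (fun a => f a = true)) = (a ∈ univ.filter (fun a => g a = true)) := by
      simp only at hfg; rw [hfg]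
    simp only [mem_filter, mem_univ, true_and, eq_iff_iff] at this
    cases hf : f a <;> cases hg : g a <;> simp [hf, hg] at this ⊢
  have hsh : ∀ Y : Finset α, 𝒜.Shatters Y → shatters S Y := by
    intro Y hY f
    obtain ⟨u, hu, huY⟩ := hY (t := Y.filter (fun a => f a = true)) (filter_subset _ _)
    obtain ⟨s, hs, rfl⟩ := mem_image.1 hu
    refine ⟨s, hs, fun a ha => ?_⟩
    have : a ∈ Y ∩ univ.filter (fun a => s a = true) ↔ a ∈ Y.filter (fun a => f a = true) := by
      rw [huY]
    simp only [mem_inter, mem_filter, mem_univ, true_and, ha] at this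
    cases hf : f a <;> cases hg : s a <;> simp [hf, hg] at this ⊢
  have hvc : 𝒜.vcDim ≤ d := by
    apply Finset.sup_le
    intro s hs
    exact hd.2 ⟨s, hsh s (mem_shatterer.1 hs), rfl⟩
  have h1 : 𝒜.card ≤ 𝒜.shatterer.card := card_le_card_shatterer 𝒜
  have h2 := card_shatterer_le_sum_vcDim (𝒜 := 𝒜)
  have h3 : ∑ k ∈ Iic 𝒜.vcDim, (Fintype.card α).choose k
      ≤ ∑ i ∈ range (d + 1), (Fintype.card α).choose i := by
    rw [← Nat.Iio_eq_range]
    exact Finset.sum_le_sum_of_subset fun x hx => mem_Iio.2 (by have := mem_Iic.1 hx; omega)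
  omega
end

section
/- A finite set system S ⊆ {0,1}^X is shattering-extremal if and only if it is lopsided, i.e., for every partition {X', X''} of X, exactly one of the following holds: S contains an X'-cube, or the complement of S contains an X''-cube. -/
open Finset

variable {α : Type*} [Fintype α] [DecidableEq α]

/-- `S` contains the `Y`-cube determined by `g` (values outside `Y` fixed by `g`). -/
def containsCube (S : Finset (α → Bool)) (Y : Finset α) : Prop :=
  ∃ g : α → Bool, ∀ h : α → Bool, (∀ a ∉ Y, h a = g a) → h ∈ S

lemma sstr_iff_cube (S : Finset (α → Bool)) (Y : Finset α) :
    stronglyShatters S Y ↔ containsCube S Y := by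
  constructor
  · rintro ⟨g, hg⟩
    refine ⟨g, fun h hh => ?_⟩
    have := hg h
    have he : (fun a => if a ∈ Y then h a else g a) = h := by
      funext a
      by_cases ha : a ∈ Y <;> simp [ha, hh]
    rwa [he] at this
  · rintro ⟨g, hg⟩
    refine ⟨g, fun f => hg _ fun a ha => by simp [ha]⟩

lemma str_iff_not_cube (S : Finset (α → Bool)) (Y : Finset α) :
    shatters S Y ↔ ¬ containsCube Sᶜ Yᶜ := by
  constructor
  · rintro hs ⟨g, hg⟩
    obtain ⟨s, hsS, hsa⟩ := hs g
    have : s ∈ Sᶜ := hg s (fun a ha => hsa a (by simpa using ha))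
    simp [Finset.mem_compl] at this
    exact this hsS
  · intro hn f
    by_contra h
    push_neg at h
    refine hn ⟨f, fun s hs => ?_⟩
    simp only [Finset.mem_compl]
    intro hsS
    obtain ⟨a, haY, hne⟩ := h s hsS
    exact hne (hs a (by simpa using haY))

lemma not_both (S : Finset (α → Bool)) (Y : Finset α) :
    ¬ (containsCube S Y ∧ containsCube Sᶜ Yᶜ) := by
  rintro ⟨⟨g, hg⟩, ⟨g', hg'⟩⟩
  set h : α → Bool := fun a => if a ∈ Y then g' a else g a with hh
  have h1 : h ∈ S := hg h fun a ha => by simp [hh, ha]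
  have h2 : h ∈ Sᶜ := hg' h fun a ha => by
    simp only [Finset.mem_compl, not_not] at ha; simp [hh, ha]
  simp [Finset.mem_compl] at h2
  exact h2 h1

theorem stmt7 (S : Finset (α → Bool)) :
    SE S ↔ ∀ X' : Finset α, Xor' (containsCube S X') (containsCube Sᶜ X'ᶜ) := by
  constructor
  · intro hse X'
    have h := (hse X').symm
    rw [sstr_iff_cube, str_iff_not_cube] at h
    rcases Classical.em (containsCube S X') with hA | hA
    · exact Or.inl ⟨hA, fun hB => not_both S X' ⟨hA, hB⟩⟩
    · exact Or.inr ⟨not_not.mp fun hB => hA (h.mpr hB), hA⟩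
  · intro hx Y
    rw [sstr_iff_cube, str_iff_not_cube]
    rcases hx Y with ⟨hA, hB⟩ | ⟨hB, hA⟩
    · exact ⟨fun _ => hA, fun _ => hB⟩
    · exact ⟨fun h => (h hB).elim, fun hA' => (hA hA').elim⟩
end

section
/- A finite set system S ⊆ {0,1}^X is shattering-extremal if and only if for every partition {X', X''} of X, exactly one of the following holds: S shatters X', or the complement of S shatters X''. -/
open Finset

variable {α : Type*} [Fintype α] [DecidableEq α]

theorem stmt8 (S : Finset (α → Bool)) :
    SE S ↔ ∀ X' : Finset α, Xor' (shatters S X') (shatters Sᶜ X'ᶜ) := by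
  have key : ∀ Y : Finset α, shatters Sᶜ Yᶜ ↔ ¬ stronglyShatters S Y := by
    intro Y
    constructor
    · rintro h ⟨g, hg⟩
      obtain ⟨s, hs, hsg⟩ := h g
      have heq : (fun a => if a ∈ Y then s a else g a) = s := by
        funext a
        by_cases ha : a ∈ Y
        · simp [ha]
        · simp [ha, hsg a (Finset.mem_compl.2 ha)]
      have hmem := hg s
      rw [heq] at hmem
      exact Finset.mem_compl.1 hs hmem
    · intro h f
      rw [stronglyShatters] at h
      push_neg at h
      obtain ⟨f', hf'⟩ := h f
      refine ⟨_, Finset.mem_compl.2 hf', ?_⟩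
      intro a ha
      simp [Finset.mem_compl.1 ha]
  constructor
  · intro hSE X'
    rw [key X']
    rcases Classical.em (shatters S X') with h | h
    · exact Or.inl ⟨h, not_not.2 ((hSE X').1 h)⟩
    · exact Or.inr ⟨fun hs => h ((hSE X').2 hs), h⟩
  · intro h Y
    rcases h Y with ⟨h1, h2⟩ | ⟨h1, h2⟩
    · rw [key] at h2
      exact ⟨fun _ => not_not.1 h2, fun _ => h1⟩
    · rw [key] at h1
      exact ⟨fun hy => absurd hy h2, fun hs => absurd hs h1⟩
end

section
/- For S ⊆ {0,1}^X and distinct x, y ∈ X: ∪_{{y}}(∩_{{x}}(S)) ⊆ ∩_{{x}}(∪_{{y}}(S)); moreover if S is shattering-extremal then equality holds. -/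
open Finset

variable {α : Type*} [Fintype α] [DecidableEq α]

open Classical in
/-- Project `S` onto the coordinates outside `Y` (existential image), padding `Y` with `false`. -/
noncomputable def unionOp (Y : Finset α) (S : Finset (α → Bool)) : Finset (α → Bool) :=
  Finset.univ.filter (fun f => (∀ a ∈ Y, f a = false) ∧
    ∃ g : α → Bool, (fun a => if a ∈ Y then g a else f a) ∈ S)

open Classical in
/-- Project `S` onto the coordinates outside `Y` (universal image), padding `Y` with `false`. -/
noncomputable def interOp (Y : Finset α) (S : Finset (α → Bool)) : Finset (α → Bool) :=
  Finset.univ.filter (fun f => (∀ a ∈ Y, f a = false) ∧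
    ∀ g : α → Bool, (fun a => if a ∈ Y then g a else f a) ∈ S)

omit [Fintype α] in
theorem sstr_shatters {S : Finset (α → Bool)} {Y : Finset α}
    (h : stronglyShatters S Y) : shatters S Y := by
  obtain ⟨g, hg⟩ := h
  intro f
  exact ⟨_, hg f, fun a ha => by simp [ha]⟩

open Classical in
theorem SE_filter {S : Finset (α → Bool)} (hS : SE S) (z : α) (b : Bool) :
    SE (S.filter (fun s => s z = b)) := by
  classical
  intro Y
  constructor
  · intro hsh
    by_cases hz : z ∈ Y
    · exfalso
      obtain ⟨s, hs, hsa⟩ := hsh (fun _ => !b)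
      rw [Finset.mem_filter] at hs
      have := hsa z hz
      rw [hs.2] at this
      simp at this
    · have hshS : shatters S Y := fun f => by
        obtain ⟨s, hs, hsa⟩ := hsh f
        exact ⟨s, (Finset.mem_filter.mp hs).1, hsa⟩
      obtain ⟨g₀, hg₀⟩ := (hS Y).mp hshS
      by_cases hgz : g₀ z = b
      · exact ⟨g₀, fun f => Finset.mem_filter.mpr ⟨hg₀ f, by simp [hz, hgz]⟩⟩
      · have hsh' : shatters S (insert z Y) := by
          intro f
          by_cases hfz : f z = b
          · obtain ⟨s, hs, hsa⟩ := hsh f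
            rw [Finset.mem_filter] at hs
            refine ⟨s, hs.1, fun a ha => ?_⟩
            rcases Finset.mem_insert.mp ha with rfl | ha
            · rw [hs.2, hfz]
            · exact hsa a ha
          · refine ⟨_, hg₀ f, fun a ha => ?_⟩
            rcases Finset.mem_insert.mp ha with rfl | ha
            · simp only [hz, if_neg]
              revert hgz hfz
              cases h1 : f a <;> cases h2 : g₀ a <;> cases b <;> simp
            · simp [ha]
        obtain ⟨g₁, hg₁⟩ := (hS _).mp hsh'
        refine ⟨fun a => if a = z then b else g₁ a, fun f => Finset.mem_filter.mpr ⟨?_, ?_⟩⟩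
        · have h := hg₁ (fun a => if a = z then b else f a)
          convert h using 1
          funext a
          by_cases haz : a = z
          · subst haz; simp [hz]
          · by_cases haY : a ∈ Y <;> simp [haz, haY, Finset.mem_insert]
        · simp [hz]
  · exact sstr_shatters

open Classical in
theorem SE_filter_agree {S : Finset (α → Bool)} (hS : SE S) (f : α → Bool) (T : Finset α) :
    SE (S.filter (fun s => ∀ a ∈ T, s a = f a)) := by
  classical
  induction T using Finset.induction_on with
  | empty => simpa using hS
  | @insert z T hzT ih =>
    have heq : S.filter (fun s => ∀ a ∈ insert z T, s a = f a)
        = (S.filter (fun s => ∀ a ∈ T, s a = f a)).filter (fun s => s z = f z) := by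
      ext s
      simp only [Finset.mem_filter, Finset.forall_mem_insert]
      tauto
    rw [heq]
    exact SE_filter ih z (f z)

theorem mem_unionOp {Y : Finset α} {S : Finset (α → Bool)} {f : α → Bool} :
    f ∈ unionOp Y S ↔ (∀ a ∈ Y, f a = false) ∧
      ∃ g : α → Bool, (fun a => if a ∈ Y then g a else f a) ∈ S := by
  simp [unionOp]

theorem mem_interOp {Y : Finset α} {S : Finset (α → Bool)} {f : α → Bool} :
    f ∈ interOp Y S ↔ (∀ a ∈ Y, f a = false) ∧
      ∀ g : α → Bool, (fun a => if a ∈ Y then g a else f a) ∈ S := by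
  simp [interOp]

theorem stmt15 (S : Finset (α → Bool)) {x y : α} (hxy : x ≠ y) :
    unionOp {y} (interOp {x} S) ⊆ interOp {x} (unionOp {y} S) ∧
    (SE S → unionOp {y} (interOp {x} S) = interOp {x} (unionOp {y} S)) := by
  classical
  have hyx : y ≠ x := Ne.symm hxy
  have hsub : unionOp {y} (interOp {x} S) ⊆ interOp {x} (unionOp {y} S) := by
    intro f hf
    rw [mem_unionOp] at hf
    obtain ⟨hfy', g, hg⟩ := hf
    have hfy : f y = false := hfy' y (Finset.mem_singleton_self y)
    rw [mem_interOp] at hg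
    obtain ⟨hFx, hall⟩ := hg
    have hfx : f x = false := by
      have := hFx x (Finset.mem_singleton_self x)
      simpa [hxy] using this
    rw [mem_interOp]
    constructor
    · intro a ha
      rw [Finset.mem_singleton] at ha; subst ha; exact hfx
    · intro h
      rw [mem_unionOp]
      constructor
      · intro a ha
        rw [Finset.mem_singleton] at ha; subst ha
        simpa [hyx] using hfy
      · refine ⟨g, ?_⟩
        have hmem := hall h
        convert hmem using 1
        funext a
        by_cases hay : a = y
        · subst hay; simp [hyx]
        · by_cases hax : a = x <;> simp [hay, hax, hxy]
  refine ⟨hsub, fun hSE => ?_⟩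
  apply Finset.Subset.antisymm hsub
  intro f hf
  rw [mem_interOp] at hf
  obtain ⟨hfx', hall⟩ := hf
  have hfx : f x = false := hfx' x (Finset.mem_singleton_self x)
  have hfy : f y = false := by
    have h0 := hall (fun _ => false)
    rw [mem_unionOp] at h0
    have := h0.1 y (Finset.mem_singleton_self y)
    simpa [hyx] using this
  set T : Finset α := Finset.univ \ {x, y} with hT
  have hSE' := SE_filter_agree hSE f T
  set S' := S.filter (fun s => ∀ a ∈ T, s a = f a) with hS'
  have hexists : ∀ b : Bool, ∃ s ∈ S', s x = b := by
    intro b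
    have hb := hall (fun _ => b)
    rw [mem_unionOp] at hb
    obtain ⟨-, g, hg⟩ := hb
    refine ⟨_, Finset.mem_filter.mpr ⟨hg, ?_⟩, ?_⟩
    · intro a ha
      rw [hT] at ha
      simp only [Finset.mem_sdiff, Finset.mem_univ, Finset.mem_insert,
        Finset.mem_singleton, true_and] at ha
      push_neg at ha
      simp [ha.1, ha.2]
    · simp [hxy]
  have hshat : shatters S' {x} := by
    intro h
    obtain ⟨s, hs, hsx⟩ := hexists (h x)
    exact ⟨s, hs, fun a ha => by rw [Finset.mem_singleton] at ha; subst ha; exact hsx⟩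
  obtain ⟨g, hg⟩ := (hSE' {x}).mp hshat
  rw [mem_unionOp]
  refine ⟨fun a ha => by rw [Finset.mem_singleton] at ha; subst ha; exact hfy, g, ?_⟩
  rw [mem_interOp]
  constructor
  · intro a ha
    rw [Finset.mem_singleton] at ha; subst ha
    simpa [hxy] using hfx
  · intro h
    have hEh := hg h
    rw [hS', Finset.mem_filter] at hEh
    obtain ⟨hES, hagree⟩ := hEh
    convert hES using 1
    funext a
    by_cases hax : a = x
    · subst hax; simp
    · by_cases hay : a = y
      · subst hay; simp [hyx]
      · have haT : a ∈ T := by rw [hT]; simp [hax, hay]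
        have hga := hagree a haT
        simp only [Finset.mem_singleton, hax, if_neg, if_false] at hga
        simp [hax, hay, hga]
end

section
/- Let G = (V, E) be a finite undirected simple graph, W ⊆ V, and s ∈ W. The number of orientations of E such that every w ∈ W is reachable from s by a directed path equals the number of subsets X ⊆ E such that all vertices of W lie in the same connected component of the subgraph (V, X). -/
open Relation

namespace Stmt19Aux

variable {V : Type*} {ι : Type*} [DecidableEq V] [DecidableEq ι]

def ostep (a b : ι → V) (E D : Finset ι) (x y : V) : Prop :=
  ∃ i ∈ E, (a i = x ∧ b i = y ∧ i ∈ D) ∨ (a i = y ∧ b i = x ∧ i ∉ D)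

def cstep (a b : ι → V) (X : Finset ι) (x y : V) : Prop :=
  ∃ i ∈ X, (a i = x ∧ b i = y) ∨ (a i = y ∧ b i = x)

def OGood (a b : ι → V) (E D : Finset ι) (W : Set V) (s : V) : Prop :=
  ∀ w ∈ W, ReflTransGen (ostep a b E D) s w

def CGood (a b : ι → V) (X : Finset ι) (W : Set V) (s : V) : Prop :=
  ∀ w ∈ W, ReflTransGen (cstep a b X) s w

lemma reach_closed {α} {R : α → α → Prop} {S : Set α} (hS : ∀ x ∈ S, ∀ y, R x y → y ∈ S)
    {s x : α} (hs : s ∈ S) (h : ReflTransGen R s x) : x ∈ S := by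
  induction h with
  | refl => exact hs
  | tail _ hstep ih => exact hS _ ih _ hstep

lemma reach_map {α β} {R : α → α → Prop} {R' : β → β → Prop} (f : α → β)
    (h : ∀ x y, R x y → ReflTransGen R' (f x) (f y)) {s x : α}
    (hr : ReflTransGen R s x) : ReflTransGen R' (f s) (f x) := by
  induction hr with
  | refl => exact .refl
  | tail _ hstep ih => exact ih.trans (h _ _ hstep)

lemma reach_lift {α β} {R' : β → β → Prop} {R : α → α → Prop} (f : α → β) {s : α}
    (h : ∀ x y, R' x y → ∀ x₀, f x₀ = x → ReflTransGen R s x₀ →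
      ∃ y₀, f y₀ = y ∧ ReflTransGen R s y₀) :
    ∀ z, ReflTransGen R' (f s) z → ∃ z₀, f z₀ = z ∧ ReflTransGen R s z₀ := by
  intro z hz
  induction hz with
  | refl => exact ⟨s, rfl, .refl⟩
  | tail _ hstep ih =>
      obtain ⟨x₀, hx₀, hr⟩ := ih
      exact h _ _ hstep x₀ hx₀ hr

lemma ostep_congr {a b : ι → V} {E D D₂ : Finset ι} (h : ∀ i ∈ E, i ∈ D ↔ i ∈ D₂) :
    ostep a b E D = ostep a b E D₂ := by
  ext x y
  constructor <;>
  · rintro ⟨i, hiE, (⟨h1, h2, h3⟩ | ⟨h1, h2, h3⟩)⟩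
    · exact ⟨i, hiE, Or.inl ⟨h1, h2, by have := h i hiE; tauto⟩⟩
    · exact ⟨i, hiE, Or.inr ⟨h1, h2, by have := h i hiE; tauto⟩⟩

lemma ostep_mono {a b : ι → V} {E E' D D' : Finset ι} (hE : E' ⊆ E)
    (hD : ∀ i ∈ E', (i ∈ D' ↔ i ∈ D)) :
    ∀ x y, ostep a b E' D' x y → ostep a b E D x y := by
  rintro x y ⟨i, hiE, (⟨h1, h2, h3⟩ | ⟨h1, h2, h3⟩)⟩
  · exact ⟨i, hE hiE, Or.inl ⟨h1, h2, (hD i hiE).1 h3⟩⟩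
  · exact ⟨i, hE hiE, Or.inr ⟨h1, h2, fun hc => h3 ((hD i hiE).2 hc)⟩⟩

lemma fin_aux {E : Finset ι} {P : Finset ι → Prop} (h : ∀ D, P D → D ⊆ E) :
    Finite {D : Finset ι // P D} := by
  apply Finite.of_injective
    (fun D => (⟨D.1, Finset.mem_powerset.2 (h D.1 D.2)⟩ : {X // X ∈ E.powerset}))
  intro x y hxy
  exact Subtype.ext (by simpa [Subtype.ext_iff] using hxy)

open scoped Classical in
noncomputable def splitEquiv {α : Type*} (p q : α → Prop) :
    {x // p x} ≃ {x // p x ∧ q x} ⊕ {x // p x ∧ ¬ q x} where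
  toFun x := if h : q x.1 then .inl ⟨x.1, x.2, h⟩ else .inr ⟨x.1, x.2, h⟩
  invFun y := y.elim (fun z => ⟨z.1, z.2.1⟩) (fun z => ⟨z.1, z.2.1⟩)
  left_inv := by intro x; by_cases h : q x.1 <;> simp [h]
  right_inv := by rintro (⟨x, hp, hq⟩ | ⟨x, hp, hq⟩) <;> simp [hq]

lemma card_split {E : Finset ι} (P Q : Finset ι → Prop) (hP : ∀ D, P D → D ⊆ E) :
    Nat.card {D : Finset ι // P D}
      = Nat.card {D : Finset ι // P D ∧ Q D} + Nat.card {D : Finset ι // P D ∧ ¬ Q D} := by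
  haveI : Finite {D : Finset ι // P D ∧ Q D} := fin_aux (fun D hD => hP D hD.1)
  haveI : Finite {D : Finset ι // P D ∧ ¬ Q D} := fin_aux (fun D hD => hP D hD.1)
  rw [Nat.card_congr (splitEquiv P Q), Nat.card_sum]


def ctr (u v : V) (x : V) : V := if x = v then u else x

lemma ctr_u {u v : V} : ctr u v u = u := by unfold ctr; split <;> simp_all
lemma ctr_v {u v : V} : ctr u v v = u := by simp [ctr]

lemma ctr_eq_ctr {u v x y : V} (h : ctr u v x = ctr u v y) :
    x = y ∨ ((x = u ∨ x = v) ∧ (y = u ∨ y = v)) := by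
  unfold ctr at h; split_ifs at h <;> tauto

lemma ctr_of_ne {u v x : V} (h : x ≠ v) : ctr u v x = x := if_neg h

section Contract
variable {a b : ι → V} {i0 : ι} {u v : V}

lemma contract_ostep_reach (hu : a i0 = u) (hv : b i0 = v)
    {F F' D D' : Finset ι} (hF : ∀ i ∈ F, i = i0 ∨ (i ∈ F' ∧ (i ∈ D ↔ i ∈ D'))) {s x : V}
    (h : ReflTransGen (ostep a b F D) s x) :
    ReflTransGen (ostep (ctr u v ∘ a) (ctr u v ∘ b) F' D') (ctr u v s) (ctr u v x) := by
  refine reach_map _ ?_ h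
  rintro x y ⟨i, hiF, hcase⟩
  rcases hF i hiF with rfl | ⟨hiF', hiD⟩
  · have : ctr u v x = ctr u v y := by
      rcases hcase with ⟨h1, h2, _⟩ | ⟨h1, h2, _⟩ <;> subst hu hv <;> subst h1 h2 <;>
        simp [ctr_u, ctr_v]
    exact this ▸ ReflTransGen.refl
  · refine ReflTransGen.single ?_
    rcases hcase with ⟨h1, h2, h3⟩ | ⟨h1, h2, h3⟩
    · exact ⟨i, hiF', Or.inl ⟨by simp [h1], by simp [h2], hiD.1 h3⟩⟩
    · exact ⟨i, hiF', Or.inr ⟨by simp [h1], by simp [h2], fun hc => h3 (hiD.2 hc)⟩⟩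

lemma contract_cstep_reach (hu : a i0 = u) (hv : b i0 = v)
    {X X' : Finset ι} (hX : ∀ i ∈ X, i = i0 ∨ i ∈ X') {s x : V}
    (h : ReflTransGen (cstep a b X) s x) :
    ReflTransGen (cstep (ctr u v ∘ a) (ctr u v ∘ b) X') (ctr u v s) (ctr u v x) := by
  refine reach_map _ ?_ h
  rintro x y ⟨i, hiX, hcase⟩
  rcases hX i hiX with rfl | hiX'
  · have : ctr u v x = ctr u v y := by
      rcases hcase with ⟨h1, h2⟩ | ⟨h1, h2⟩ <;> subst hu hv <;> subst h1 h2 <;>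
        simp [ctr_u, ctr_v]
    exact this ▸ ReflTransGen.refl
  · refine ReflTransGen.single ?_
    rcases hcase with ⟨h1, h2⟩ | ⟨h1, h2⟩
    · exact ⟨i, hiX', Or.inl ⟨by simp [h1], by simp [h2]⟩⟩
    · exact ⟨i, hiX', Or.inr ⟨by simp [h1], by simp [h2]⟩⟩

lemma contract_ogood (hu : a i0 = u) (hv : b i0 = v)
    {F F' D D' : Finset ι} (hF : ∀ i ∈ F, i = i0 ∨ (i ∈ F' ∧ (i ∈ D ↔ i ∈ D')))
    {W : Set V} {s : V} (h : OGood a b F D W s) :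
    OGood (ctr u v ∘ a) (ctr u v ∘ b) F' D' (ctr u v '' W) (ctr u v s) := by
  rintro _ ⟨w, hw, rfl⟩
  exact contract_ostep_reach hu hv hF (h w hw)

lemma contract_cgood (hu : a i0 = u) (hv : b i0 = v)
    {X X' : Finset ι} (hX : ∀ i ∈ X, i = i0 ∨ i ∈ X')
    {W : Set V} {s : V} (h : CGood a b X W s) :
    CGood (ctr u v ∘ a) (ctr u v ∘ b) X' (ctr u v '' W) (ctr u v s) := by
  rintro _ ⟨w, hw, rfl⟩
  exact contract_cstep_reach hu hv hX (h w hw)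


lemma reach_insert_sub (hu : a i0 = u) (hv : b i0 = v) {E' D : Finset ι} {s : V}
    (h1 : i0 ∈ D → ReflTransGen (ostep a b E' D) s u → ReflTransGen (ostep a b E' D) s v)
    (h2 : i0 ∉ D → ReflTransGen (ostep a b E' D) s v → ReflTransGen (ostep a b E' D) s u)
    {x : V} (h : ReflTransGen (ostep a b (insert i0 E') D) s x) :
    ReflTransGen (ostep a b E' D) s x := by
  refine reach_closed (S := {z | ReflTransGen (ostep a b E' D) s z}) ?_ ReflTransGen.refl h
  rintro x hx y ⟨i, hiE, hcase⟩
  rcases Finset.mem_insert.1 hiE with rfl | hiE'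
  · rcases hcase with ⟨ha, hb, hD⟩ | ⟨ha, hb, hD⟩
    · rw [hu] at ha; rw [hv] at hb; subst ha; subst hb; exact h1 hD hx
    · rw [hu] at ha; rw [hv] at hb; subst ha; subst hb; exact h2 hD hx
  · exact ReflTransGen.tail hx ⟨i, hiE', hcase⟩

lemma creach_sub (hu : a i0 = u) (hv : b i0 = v) {E' D : Finset ι} {s : V}
    (hus : ¬ ReflTransGen (ostep a b E' D) s u) (hvs : ¬ ReflTransGen (ostep a b E' D) s v) :
    ∀ z, ReflTransGen (ostep (ctr u v ∘ a) (ctr u v ∘ b) E' D) (ctr u v s) z →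
      ∃ x, ctr u v x = z ∧ ReflTransGen (ostep a b E' D) s x := by
  refine reach_lift (ctr u v) ?_
  rintro x y ⟨i, hiE, hcase⟩ x₀ hx₀ hr
  rcases hcase with ⟨ha, hb, hD⟩ | ⟨ha, hb, hD⟩
  · have heqc : ctr u v (a i) = ctr u v x₀ := by rw [hx₀]; exact ha
    rcases ctr_eq_ctr heqc with heq | ⟨hax, hx₀uv⟩
    · exact ⟨b i, hb, (heq ▸ hr).tail ⟨i, hiE, Or.inl ⟨rfl, rfl, hD⟩⟩⟩
    · rcases hx₀uv with rfl | rfl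
      · exact absurd hr hus
      · exact absurd hr hvs
  · have heqc : ctr u v (b i) = ctr u v x₀ := by rw [hx₀]; exact hb
    rcases ctr_eq_ctr heqc with heq | ⟨hbx, hx₀uv⟩
    · exact ⟨a i, ha, (heq ▸ hr).tail ⟨i, hiE, Or.inr ⟨rfl, rfl, hD⟩⟩⟩
    · rcases hx₀uv with rfl | rfl
      · exact absurd hr hus
      · exact absurd hr hvs

lemma uv_mem (hu : a i0 = u) (hv : b i0 = v) {E' D' : Finset ι} {W : Set V} {s : V}
    (hC : OGood (ctr u v ∘ a) (ctr u v ∘ b) E' D' (ctr u v '' W) (ctr u v s))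
    (hng : ¬ OGood a b E' D' W s) :
    ReflTransGen (ostep a b E' D') s u ∨ ReflTransGen (ostep a b E' D') s v := by
  by_contra hcon
  push_neg at hcon
  obtain ⟨hus, hvs⟩ := hcon
  apply hng
  intro w hw
  obtain ⟨x, hx, hr⟩ := creach_sub hu hv hus hvs _ (hC (ctr u v w) ⟨w, hw, rfl⟩)
  rcases ctr_eq_ctr hx with rfl | ⟨hxuv, hwuv⟩
  · exact hr
  · rcases hxuv with rfl | rfl
    · exact absurd hr hus
    · exact absurd hr hvs

lemma olift (hu : a i0 = u) (hv : b i0 = v) {E' D' D : Finset ι} {W : Set V} {s : V}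
    (hD : ∀ i ∈ E', (i ∈ D' ↔ i ∈ D))
    (Hu : ReflTransGen (ostep a b (insert i0 E') D) s u)
    (Hv : ReflTransGen (ostep a b (insert i0 E') D) s v)
    (hC : OGood (ctr u v ∘ a) (ctr u v ∘ b) E' D' (ctr u v '' W) (ctr u v s)) :
    OGood a b (insert i0 E') D W s := by
  have key : ∀ z, ReflTransGen (ostep (ctr u v ∘ a) (ctr u v ∘ b) E' D') (ctr u v s) z →
      ∃ z₀, ctr u v z₀ = z ∧ ReflTransGen (ostep a b (insert i0 E') D) s z₀ := by
    refine reach_lift (ctr u v) ?_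
    rintro x y ⟨i, hiE, hcase⟩ x₀ hx₀ hr
    rcases hcase with ⟨ha, hb, hD'⟩ | ⟨ha, hb, hD'⟩
    · have hra : ReflTransGen (ostep a b (insert i0 E') D) s (a i) := by
        have heqc : ctr u v (a i) = ctr u v x₀ := by rw [hx₀]; exact ha
        rcases ctr_eq_ctr heqc with heq | ⟨hax, _⟩
        · exact heq ▸ hr
        · rcases hax with h' | h' <;> rw [h']
          · exact Hu
          · exact Hv
      exact ⟨b i, hb, hra.tail ⟨i, Finset.mem_insert_of_mem hiE,
        Or.inl ⟨rfl, rfl, (hD i hiE).1 hD'⟩⟩⟩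
    · have hrb : ReflTransGen (ostep a b (insert i0 E') D) s (b i) := by
        have heqc : ctr u v (b i) = ctr u v x₀ := by rw [hx₀]; exact hb
        rcases ctr_eq_ctr heqc with heq | ⟨hbx, _⟩
        · exact heq ▸ hr
        · rcases hbx with h' | h' <;> rw [h']
          · exact Hu
          · exact Hv
      exact ⟨a i, ha, hrb.tail ⟨i, Finset.mem_insert_of_mem hiE,
        Or.inr ⟨rfl, rfl, fun hc => hD' ((hD i hiE).2 hc)⟩⟩⟩
  intro w hw
  obtain ⟨z₀, hz, hr⟩ := key (ctr u v w) (hC _ ⟨w, hw, rfl⟩)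
  rcases ctr_eq_ctr hz with rfl | ⟨_, hwuv⟩
  · exact hr
  · rcases hwuv with rfl | rfl
    · exact Hu
    · exact Hv

lemma clift (hu : a i0 = u) (hv : b i0 = v) {X : Finset ι} {W : Set V} {s : V} (hi0 : i0 ∈ X)
    (hC : CGood (ctr u v ∘ a) (ctr u v ∘ b) (X.erase i0) (ctr u v '' W) (ctr u v s)) :
    CGood a b X W s := by
  have huv : ∀ x, (x = u ∨ x = v) → ReflTransGen (cstep a b X) s x →
      ReflTransGen (cstep a b X) s u ∧ ReflTransGen (cstep a b X) s v := by
    intro x hx hr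
    have stepuv : cstep a b X u v := ⟨i0, hi0, Or.inl ⟨hu, hv⟩⟩
    have stepvu : cstep a b X v u := ⟨i0, hi0, Or.inr ⟨hu, hv⟩⟩
    rcases hx with rfl | rfl
    · exact ⟨hr, hr.tail stepuv⟩
    · exact ⟨hr.tail stepvu, hr⟩
  have key : ∀ z, ReflTransGen (cstep (ctr u v ∘ a) (ctr u v ∘ b) (X.erase i0)) (ctr u v s) z →
      ∃ z₀, ctr u v z₀ = z ∧ ReflTransGen (cstep a b X) s z₀ := by
    refine reach_lift (ctr u v) ?_
    rintro x y ⟨i, hiE, hcase⟩ x₀ hx₀ hr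
    rcases hcase with ⟨ha, hb⟩ | ⟨ha, hb⟩
    · have hra : ReflTransGen (cstep a b X) s (a i) := by
        have heqc : ctr u v (a i) = ctr u v x₀ := by rw [hx₀]; exact ha
        rcases ctr_eq_ctr heqc with heq | ⟨hax, hx₀uv⟩
        · exact heq ▸ hr
        · obtain ⟨hru, hrv⟩ := huv x₀ hx₀uv hr
          rcases hax with h' | h' <;> rw [h']
          · exact hru
          · exact hrv
      exact ⟨b i, hb, hra.tail ⟨i, Finset.mem_of_mem_erase hiE, Or.inl ⟨rfl, rfl⟩⟩⟩
    · have hrb : ReflTransGen (cstep a b X) s (b i) := by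
        have heqc : ctr u v (b i) = ctr u v x₀ := by rw [hx₀]; exact hb
        rcases ctr_eq_ctr heqc with heq | ⟨hbx, hx₀uv⟩
        · exact heq ▸ hr
        · obtain ⟨hru, hrv⟩ := huv x₀ hx₀uv hr
          rcases hbx with h' | h' <;> rw [h']
          · exact hru
          · exact hrv
      exact ⟨a i, ha, hrb.tail ⟨i, Finset.mem_of_mem_erase hiE, Or.inr ⟨rfl, rfl⟩⟩⟩
  intro w hw
  obtain ⟨z₀, hz, hr⟩ := key (ctr u v w) (hC _ ⟨w, hw, rfl⟩)
  rcases ctr_eq_ctr hz with rfl | ⟨hz₀uv, hwuv⟩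
  · exact hr
  · obtain ⟨hru, hrv⟩ := huv z₀ hz₀uv hr
    rcases hwuv with rfl | rfl
    · exact hru
    · exact hrv

end Contract

theorem general_count (n : ℕ) : ∀ (E : Finset ι), E.card = n → ∀ (a b : ι → V) (W : Set V) (s : V),
    Nat.card {D : Finset ι // D ⊆ E ∧ OGood a b E D W s}
      = Nat.card {X : Finset ι // X ⊆ E ∧ CGood a b X W s} := by
  induction n using Nat.strong_induction_on with
  | _ n IH =>
  intro E hcard a b W s
  rcases eq_or_ne E ∅ with rfl | hE
  · refine Nat.card_congr (Equiv.subtypeEquivRight fun X => ?_)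
    refine and_congr_right fun hsub => ?_
    have hX : X = ∅ := Finset.subset_empty.1 hsub
    subst hX
    constructor <;> intro h w hw <;> refine ReflTransGen.mono ?_ _ _ (h w hw) <;>
      rintro x y ⟨i, hi, -⟩ <;> exact absurd hi (Finset.notMem_empty i)
  · obtain ⟨i0, hi0⟩ := Finset.nonempty_iff_ne_empty.2 hE
    set E' := E.erase i0 with hE'def
    have hi0E' : i0 ∉ E' := Finset.notMem_erase _ _
    have hEi : E = insert i0 E' := (Finset.insert_erase hi0).symm
    have hcard' : E'.card < n := hcard ▸ Finset.card_erase_lt_of_mem hi0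
    rw [hEi]
    set u := a i0 with hudef
    set v := b i0 with hvdef
    have hu : a i0 = u := rfl
    have hv : b i0 = v := rfl
    set a' := ctr u v ∘ a with ha'def
    set b' := ctr u v ∘ b with hb'def
    set W' := ctr u v '' W with hW'def
    set s' := ctr u v s with hs'def
    -- abbreviations for predicates
    have econg : ∀ D : Finset ι, ostep a b E' D = ostep a b E' (D.erase i0) :=
      fun D => ostep_congr (fun i hi => by
        have : i ≠ i0 := fun h => hi0E' (h ▸ hi)
        simp [Finset.mem_erase, this])
    have magree : ∀ (D' D : Finset ι), D' ⊆ E' → (∀ i ∈ E', (i ∈ D' ↔ i ∈ insert i0 D')) := by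
      intro D' D hsub i hi
      have : i ≠ i0 := fun h => hi0E' (h ▸ hi)
      simp [Finset.mem_insert, this]
    have keymem : ∀ D : Finset ι, D ⊆ insert i0 E' → OGood a b (insert i0 E') D W s →
        ¬ OGood a b E' (D.erase i0) W s →
        (i0 ∈ D ↔ ReflTransGen (ostep a b E' (D.erase i0)) s u) := by
      intro D hsub hg hnq
      constructor
      · intro hiD
        by_contra hnu
        apply hnq
        intro w hw
        have hx : ReflTransGen (ostep a b E' D) s w := by
          refine reach_insert_sub hu hv ?_ ?_ (hg w hw)
          · intro _ hru
            rw [econg D] at hru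
            exact absurd hru hnu
          · intro hni _
            exact absurd hiD hni
        rwa [econg D] at hx
      · intro hru
        by_contra hni
        apply hnq
        intro w hw
        have hx : ReflTransGen (ostep a b E' D) s w := by
          refine reach_insert_sub hu hv ?_ ?_ (hg w hw)
          · intro hiD _
            exact absurd hiD hni
          · intro _ _
            rw [econg D]
            exact hru
        rwa [econg D] at hx
    have h1 := card_split (E := insert i0 E')
      (fun D => D ⊆ insert i0 E' ∧ OGood a b (insert i0 E') D W s)
      (fun D => OGood a b E' (D.erase i0) W s) (fun D hD => hD.1)
    have h2 := card_split (E := insert i0 E')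
      (fun D => (D ⊆ insert i0 E' ∧ OGood a b (insert i0 E') D W s) ∧
        OGood a b E' (D.erase i0) W s)
      (fun D => i0 ∈ D) (fun D hD => hD.1.1)
    have h3 : Nat.card {D : Finset ι // ((D ⊆ insert i0 E' ∧ OGood a b (insert i0 E') D W s) ∧
          OGood a b E' (D.erase i0) W s) ∧ i0 ∈ D}
        = Nat.card {D : Finset ι // D ⊆ E' ∧ OGood a b E' D W s} := by
      refine Nat.card_eq_of_bijective (fun D => ⟨D.1.erase i0, ?_, D.2.1.2⟩) ⟨?_, ?_⟩
      · have h' := Finset.erase_subset_erase i0 D.2.1.1.1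
        rwa [Finset.erase_insert hi0E'] at h'
      · intro D₁ D₂ h
        have hval : D₁.1.erase i0 = D₂.1.erase i0 := by simpa [Subtype.ext_iff] using h
        refine Subtype.ext (Finset.ext fun i => ?_)
        by_cases hii : i = i0
        · subst hii
          simp [D₁.2.2, D₂.2.2]
        · have h'' : (i ∈ D₁.1.erase i0) = (i ∈ D₂.1.erase i0) := by rw [hval]
          simpa [Finset.mem_erase, hii] using h''
      · rintro ⟨D', hD'sub, hD'g⟩
        have hni : i0 ∉ D' := fun h => hi0E' (hD'sub h)
        refine ⟨⟨insert i0 D', ⟨⟨Finset.insert_subset_insert _ hD'sub, ?_⟩, ?_⟩,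
          Finset.mem_insert_self _ _⟩, ?_⟩
        · intro w hw
          exact ReflTransGen.mono (ostep_mono (Finset.subset_insert _ _) (magree D' D' hD'sub)) _ _ (hD'g w hw)
        · rw [Finset.erase_insert hni]
          exact hD'g
        · exact Subtype.ext (by simp [Finset.erase_insert hni])
    have h4 : Nat.card {D : Finset ι // ((D ⊆ insert i0 E' ∧ OGood a b (insert i0 E') D W s) ∧
          OGood a b E' (D.erase i0) W s) ∧ i0 ∉ D}
        = Nat.card {D : Finset ι // D ⊆ E' ∧ OGood a b E' D W s} := by
      refine Nat.card_congr (Equiv.subtypeEquivRight fun D => ?_)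
      constructor
      · rintro ⟨⟨⟨hsub, hg⟩, hq⟩, hni⟩
        refine ⟨fun i hi => Finset.mem_of_mem_insert_of_ne (hsub hi)
          (fun h => hni (h ▸ hi)), ?_⟩
        rwa [Finset.erase_eq_of_notMem hni] at hq
      · rintro ⟨hsub, hg⟩
        have hni : i0 ∉ D := fun h => hi0E' (hsub h)
        refine ⟨⟨⟨hsub.trans (Finset.subset_insert _ _), fun w hw =>
          ReflTransGen.mono (ostep_mono (Finset.subset_insert _ _) (fun i hi => Iff.rfl)) _ _ (hg w hw)⟩, ?_⟩, hni⟩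
        rwa [Finset.erase_eq_of_notMem hni]
    have h5 : Nat.card {D : Finset ι // (D ⊆ insert i0 E' ∧ OGood a b (insert i0 E') D W s) ∧
          ¬ OGood a b E' (D.erase i0) W s}
        = Nat.card {D : Finset ι // (D ⊆ E' ∧ OGood a' b' E' D W' s') ∧
          ¬ OGood a b E' (D.erase i0) W s} := by
      refine Nat.card_eq_of_bijective (fun D => ⟨D.1.erase i0, ⟨?_, ?_⟩, ?_⟩) ⟨?_, ?_⟩
      · have h' := Finset.erase_subset_erase i0 D.2.1.1
        rwa [Finset.erase_insert hi0E'] at h'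
      · refine contract_ogood hu hv ?_ D.2.1.2
        intro i hi
        rcases Finset.mem_insert.1 hi with rfl | hi'
        · exact Or.inl rfl
        · refine Or.inr ⟨hi', ?_⟩
          have : i ≠ i0 := fun h => hi0E' (h ▸ hi')
          simp [Finset.mem_erase, this]
      · rw [Finset.erase_idem]
        exact D.2.2
      · intro D₁ D₂ h
        have hval : D₁.1.erase i0 = D₂.1.erase i0 := by simpa [Subtype.ext_iff] using h
        have k1 := keymem D₁.1 D₁.2.1.1 D₁.2.1.2 D₁.2.2
        have k2 := keymem D₂.1 D₂.2.1.1 D₂.2.1.2 D₂.2.2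
        rw [hval] at k1
        refine Subtype.ext (Finset.ext fun i => ?_)
        by_cases hii : i = i0
        · subst hii
          rw [k1, k2]
        · have h'' : (i ∈ D₁.1.erase i0) = (i ∈ D₂.1.erase i0) := by rw [hval]
          simpa [Finset.mem_erase, hii] using h''
      · rintro ⟨D', ⟨hsub', hcg⟩, hnq⟩
        have hniD' : i0 ∉ D' := fun h => hi0E' (hsub' h)
        have herase : D'.erase i0 = D' := Finset.erase_eq_of_notMem hniD'
        rw [herase] at hnq
        rcases uv_mem hu hv hcg hnq with hus | hvs'
        · have Hu : ReflTransGen (ostep a b (insert i0 E') (insert i0 D')) s u :=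
            ReflTransGen.mono (ostep_mono (Finset.subset_insert _ _) (magree D' D' hsub')) _ _ hus
          have Hv := Hu.tail ⟨i0, Finset.mem_insert_self _ _,
            Or.inl ⟨hu, hv, Finset.mem_insert_self _ _⟩⟩
          refine ⟨⟨insert i0 D', ⟨Finset.insert_subset_insert _ hsub', ?_⟩, ?_⟩, ?_⟩
          · exact olift hu hv (magree D' D' hsub') Hu Hv hcg
          · rw [Finset.erase_insert hniD']
            exact hnq
          · exact Subtype.ext (by simp [Finset.erase_insert hniD'])
        · by_cases hus : ReflTransGen (ostep a b E' D') s u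
          · have Hu : ReflTransGen (ostep a b (insert i0 E') (insert i0 D')) s u :=
              ReflTransGen.mono (ostep_mono (Finset.subset_insert _ _) (magree D' D' hsub')) _ _ hus
            have Hv := Hu.tail ⟨i0, Finset.mem_insert_self _ _,
              Or.inl ⟨hu, hv, Finset.mem_insert_self _ _⟩⟩
            refine ⟨⟨insert i0 D', ⟨Finset.insert_subset_insert _ hsub', ?_⟩, ?_⟩, ?_⟩
            · exact olift hu hv (magree D' D' hsub') Hu Hv hcg
            · rw [Finset.erase_insert hniD']
              exact hnq
            · exact Subtype.ext (by simp [Finset.erase_insert hniD'])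
          · have Hv : ReflTransGen (ostep a b (insert i0 E') D') s v :=
              ReflTransGen.mono (ostep_mono (Finset.subset_insert _ _) (fun i hi => Iff.rfl)) _ _ hvs'
            have Hu := Hv.tail ⟨i0, Finset.mem_insert_self _ _, Or.inr ⟨hu, hv, hniD'⟩⟩
            refine ⟨⟨D', ⟨hsub'.trans (Finset.subset_insert _ _), ?_⟩, ?_⟩, ?_⟩
            · exact olift hu hv (fun i hi => Iff.rfl) Hu Hv hcg
            · rw [herase]
              exact hnq
            · exact Subtype.ext herase
    have h6 := card_split (E := E')
      (fun D => D ⊆ E' ∧ OGood a' b' E' D W' s')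
      (fun D => OGood a b E' (D.erase i0) W s) (fun D hD => hD.1)
    have h7 : Nat.card {D : Finset ι // (D ⊆ E' ∧ OGood a' b' E' D W' s') ∧
          OGood a b E' (D.erase i0) W s}
        = Nat.card {D : Finset ι // D ⊆ E' ∧ OGood a b E' D W s} := by
      refine Nat.card_congr (Equiv.subtypeEquivRight fun D => ?_)
      constructor
      · rintro ⟨⟨hsub, _⟩, hq⟩
        have hni : i0 ∉ D := fun h => hi0E' (hsub h)
        exact ⟨hsub, by rwa [Finset.erase_eq_of_notMem hni] at hq⟩
      · rintro ⟨hsub, hg⟩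
        have hni : i0 ∉ D := fun h => hi0E' (hsub h)
        exact ⟨⟨hsub, contract_ogood hu hv (fun i hi => Or.inr ⟨hi, Iff.rfl⟩) hg⟩,
          by rwa [Finset.erase_eq_of_notMem hni]⟩
    have h8 := card_split (E := insert i0 E')
      (fun X => X ⊆ insert i0 E' ∧ CGood a b X W s)
      (fun X => i0 ∈ X) (fun X hX => hX.1)
    have h9 : Nat.card {X : Finset ι // (X ⊆ insert i0 E' ∧ CGood a b X W s) ∧ i0 ∉ X}
        = Nat.card {X : Finset ι // X ⊆ E' ∧ CGood a b X W s} := by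
      refine Nat.card_congr (Equiv.subtypeEquivRight fun X => ?_)
      constructor
      · rintro ⟨⟨hsub, hg⟩, hni⟩
        exact ⟨fun i hi => Finset.mem_of_mem_insert_of_ne (hsub hi)
          (fun h => hni (h ▸ hi)), hg⟩
      · rintro ⟨hsub, hg⟩
        exact ⟨⟨hsub.trans (Finset.subset_insert _ _), hg⟩, fun h => hi0E' (hsub h)⟩
    have h10 : Nat.card {X : Finset ι // (X ⊆ insert i0 E' ∧ CGood a b X W s) ∧ i0 ∈ X}
        = Nat.card {X : Finset ι // X ⊆ E' ∧ CGood a' b' X W' s'} := by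
      refine Nat.card_eq_of_bijective (fun X => ⟨X.1.erase i0, ?_, ?_⟩) ⟨?_, ?_⟩
      · have h' := Finset.erase_subset_erase i0 X.2.1.1
        rwa [Finset.erase_insert hi0E'] at h'
      · refine contract_cgood hu hv ?_ X.2.1.2
        intro i hi
        by_cases hii : i = i0
        · exact Or.inl hii
        · exact Or.inr (Finset.mem_erase.2 ⟨hii, hi⟩)
      · intro X₁ X₂ h
        have hval : X₁.1.erase i0 = X₂.1.erase i0 := by simpa [Subtype.ext_iff] using h
        refine Subtype.ext (Finset.ext fun i => ?_)
        by_cases hii : i = i0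
        · subst hii
          simp [X₁.2.2, X₂.2.2]
        · have h'' : (i ∈ X₁.1.erase i0) = (i ∈ X₂.1.erase i0) := by rw [hval]
          simpa [Finset.mem_erase, hii] using h''
      · rintro ⟨X', hX'sub, hX'g⟩
        have hni : i0 ∉ X' := fun h => hi0E' (hX'sub h)
        have hcg : CGood a' b' ((insert i0 X').erase i0) W' s' := by
          rw [Finset.erase_insert hni]
          exact hX'g
        refine ⟨⟨insert i0 X', ⟨Finset.insert_subset_insert _ hX'sub, ?_⟩,
          Finset.mem_insert_self _ _⟩, ?_⟩
        · exact clift hu hv (Finset.mem_insert_self _ _) hcg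
        · exact Subtype.ext (by simp [Finset.erase_insert hni])
    beta_reduce at h1 h2 h6 h8
    have IH1 := IH E'.card hcard' E' rfl a b W s
    have IH2 := IH E'.card hcard' E' rfl a' b' W' s'
    omega

end Stmt19Aux

/-- `r` is an orientation of the edges of `G`: oriented pairs are edges, and each
edge gets exactly one of its two directions. -/
def IsOrientation {V : Type*} (G : SimpleGraph V) (r : V → V → Bool) : Prop :=
  (∀ u v, r u v = true → G.Adj u v) ∧
  (∀ u v, G.Adj u v → Xor' (r u v = true) (r v u = true))

open Stmt19Aux in
theorem stmt19 {V : Type*} [Fintype V] [DecidableEq V] (G : SimpleGraph V)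
    (W : Set V) (s : V) (hs : s ∈ W) :
    Nat.card {r : V → V → Bool // IsOrientation G r ∧
        ∀ w ∈ W, Relation.ReflTransGen (fun a b => r a b = true) s w}
      = Nat.card {X : Finset (Sym2 V) // ↑X ⊆ G.edgeSet ∧
          ∀ w ∈ W, (SimpleGraph.fromEdgeSet (↑X : Set (Sym2 V))).Reachable s w} := by
  classical
  set E : Finset (Sym2 V) := (Set.toFinite G.edgeSet).toFinset with hEdef
  set a : Sym2 V → V := fun e => (Quot.out e).1 with hadef
  set b : Sym2 V → V := fun e => (Quot.out e).2 with hbdef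
  have hab : ∀ e : Sym2 V, s(a e, b e) = e := fun e => Quot.out_eq e
  have hmemE : ∀ e, e ∈ E ↔ e ∈ G.edgeSet := fun e => Set.Finite.mem_toFinset _
  have hadj : ∀ e ∈ E, G.Adj (a e) (b e) := by
    intro e he
    have h' : e ∈ G.edgeSet := (hmemE e).1 he
    rw [← hab e] at h'
    exact (SimpleGraph.mem_edgeSet G).1 h'
  have hne : ∀ e ∈ E, a e ≠ b e := fun e he h => G.ne_of_adj (hadj e he) h
  have huniq : ∀ i, ∀ x y : V, (a i = x ∧ b i = y) ∨ (a i = y ∧ b i = x) → i = s(x, y) := by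
    rintro i x y (⟨h1, h2⟩ | ⟨h1, h2⟩)
    · rw [← hab i, h1, h2]
    · rw [← hab i, h1, h2, Sym2.eq_swap]
  have stepA : Nat.card {r : V → V → Bool // IsOrientation G r ∧
        ∀ w ∈ W, Relation.ReflTransGen (fun a b => r a b = true) s w}
      = Nat.card {D : Finset (Sym2 V) // D ⊆ E ∧ OGood a b E D W s} := by
    have hstep : ∀ (r : V → V → Bool), IsOrientation G r → ∀ x y,
        (r x y = true ↔ ostep a b E (E.filter (fun e => r (a e) (b e) = true)) x y) := by
      intro r hr x y
      constructor
      · intro h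
        have hAdj := hr.1 x y h
        have heE : s(x, y) ∈ E := (hmemE _).2 ((SimpleGraph.mem_edgeSet G).2 hAdj)
        have hout : (a s(x, y) = x ∧ b s(x, y) = y) ∨ (a s(x, y) = y ∧ b s(x, y) = x) :=
          Sym2.eq_iff.1 (hab s(x, y))
        rcases hout with ⟨h1, h2⟩ | ⟨h1, h2⟩
        · exact ⟨s(x, y), heE, Or.inl ⟨h1, h2, Finset.mem_filter.2 ⟨heE, by rw [h1, h2]; exact h⟩⟩⟩
        · refine ⟨s(x, y), heE, Or.inr ⟨h1, h2, fun hmem => ?_⟩⟩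
          have hyx : r y x = true := by
            have h' := (Finset.mem_filter.1 hmem).2
            rwa [h1, h2] at h'
          rcases hr.2 x y hAdj with ⟨_, hq⟩ | ⟨_, hp⟩
          · exact hq hyx
          · exact hp h
      · rintro ⟨i, hiE, (⟨h1, h2, h3⟩ | ⟨h1, h2, h3⟩)⟩
        · have h' := (Finset.mem_filter.1 h3).2
          rwa [h1, h2] at h'
        · have hAdj : G.Adj y x := by
            have h' := hadj i hiE
            rwa [h1, h2] at h'
          have hnyx : ¬ r y x = true := fun hc =>
            h3 (Finset.mem_filter.2 ⟨hiE, by rw [h1, h2]; exact hc⟩)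
          rcases hr.2 y x hAdj with ⟨hp, _⟩ | ⟨hq, _⟩
          · exact absurd hp hnyx
          · exact hq
    refine Nat.card_eq_of_bijective
      (fun r => ⟨E.filter (fun e => r.1 (a e) (b e) = true), Finset.filter_subset _ _,
        fun w hw => ReflTransGen.mono (fun x y h => (hstep r.1 r.2.1 x y).1 h) _ _ (r.2.2 w hw)⟩) ⟨?_, ?_⟩
    · intro r₁ r₂ h
      have hval : E.filter (fun e => r₁.1 (a e) (b e) = true)
          = E.filter (fun e => r₂.1 (a e) (b e) = true) := by
        simpa [Subtype.ext_iff] using h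
      refine Subtype.ext (funext fun x => funext fun y => ?_)
      have h1 := hstep r₁.1 r₁.2.1 x y
      have h2 := hstep r₂.1 r₂.2.1 x y
      rw [hval] at h1
      have hiff := h1.trans h2.symm
      cases hb1 : r₁.1 x y <;> cases hb2 : r₂.1 x y <;> simp_all
    · rintro ⟨D, hDsub, hDg⟩
      set r : V → V → Bool := fun x y => decide (ostep a b E D x y) with hrdef
      have hro : ∀ x y, r x y = true ↔ ostep a b E D x y := by
        intro x y
        simp [hrdef]
      have hansym : ∀ x y : V, x ≠ y → ostep a b E D x y → ostep a b E D y x → False := by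
        rintro x y hxy ⟨i, hiE, hci⟩ ⟨j, hjE, hcj⟩
        have hi' : i = s(x, y) := huniq i x y (by tauto)
        have hj' : j = s(x, y) := huniq j x y (by tauto)
        rw [hi'] at hci
        rw [hj'] at hcj
        rcases hci with ⟨h1, h2, h3⟩ | ⟨h1, h2, h3⟩ <;>
          rcases hcj with ⟨g1, g2, g3⟩ | ⟨g1, g2, g3⟩
        · exact hxy (h1.symm.trans g1)
        · exact g3 h3
        · exact h3 g3
        · exact hxy (g1.symm.trans h1)
      have htotal : ∀ x y : V, G.Adj x y → ostep a b E D x y ∨ ostep a b E D y x := by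
        intro x y hAdj
        have heE : s(x, y) ∈ E := (hmemE _).2 ((SimpleGraph.mem_edgeSet G).2 hAdj)
        rcases Sym2.eq_iff.1 (hab s(x, y)) with ⟨h1, h2⟩ | ⟨h1, h2⟩ <;>
          by_cases hD : s(x, y) ∈ D
        · exact Or.inl ⟨_, heE, Or.inl ⟨h1, h2, hD⟩⟩
        · exact Or.inr ⟨_, heE, Or.inr ⟨h1, h2, hD⟩⟩
        · exact Or.inr ⟨_, heE, Or.inl ⟨h1, h2, hD⟩⟩
        · exact Or.inl ⟨_, heE, Or.inr ⟨h1, h2, hD⟩⟩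
      have hOr : IsOrientation G r := by
        constructor
        · intro x y h
          obtain ⟨i, hiE, hcase⟩ := (hro x y).1 h
          rcases hcase with ⟨h1, h2, _⟩ | ⟨h1, h2, _⟩
          · have h' := hadj i hiE
            rwa [h1, h2] at h'
          · have h' := hadj i hiE
            rw [h1, h2] at h'
            exact h'.symm
        · intro x y hAdj
          have hxy : x ≠ y := G.ne_of_adj hAdj
          rcases htotal x y hAdj with h | h
          · exact Or.inl ⟨(hro x y).2 h, fun hc => hansym x y hxy h ((hro y x).1 hc)⟩
          · exact Or.inr ⟨(hro y x).2 h, fun hc => hansym x y hxy ((hro x y).1 hc) h⟩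
      refine ⟨⟨r, hOr, fun w hw => ReflTransGen.mono (fun x y h => (hro x y).2 h) _ _ (hDg w hw)⟩, ?_⟩
      refine Subtype.ext (Finset.ext fun e => ?_)
      simp only [Finset.mem_filter]
      constructor
      · rintro ⟨heE, hre⟩
        obtain ⟨i, hiE, hcase⟩ := (hro _ _).1 hre
        rcases hcase with ⟨h1, h2, h3⟩ | ⟨h1, h2, h3⟩
        · have hie : i = e := by
            rw [huniq i (a e) (b e) (Or.inl ⟨h1, h2⟩), hab e]
          exact hie ▸ h3
        · have hie : i = e := by
            rw [huniq i (a e) (b e) (Or.inr ⟨h1, h2⟩), hab e]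
          rw [hie] at h1
          exact absurd h1 (hne e heE)
      · intro heD
        have heE := hDsub heD
        exact ⟨heE, (hro _ _).2 ⟨e, heE, Or.inl ⟨rfl, rfl, heD⟩⟩⟩
  have stepB : Nat.card {X : Finset (Sym2 V) // ↑X ⊆ G.edgeSet ∧
        ∀ w ∈ W, (SimpleGraph.fromEdgeSet (↑X : Set (Sym2 V))).Reachable s w}
      = Nat.card {X : Finset (Sym2 V) // X ⊆ E ∧ CGood a b X W s} := by
    refine Nat.card_congr (Equiv.subtypeEquivRight fun X => ?_)
    have hsub_iff : (↑X : Set (Sym2 V)) ⊆ G.edgeSet ↔ X ⊆ E :=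
      ⟨fun h i hi => (hmemE i).2 (h hi), fun h i hi => (hmemE i).1 (h hi)⟩
    have hadj_iff : (↑X : Set (Sym2 V)) ⊆ G.edgeSet → ∀ x y,
        ((SimpleGraph.fromEdgeSet (↑X : Set (Sym2 V))).Adj x y ↔ cstep a b X x y) := by
      intro hX x y
      rw [SimpleGraph.fromEdgeSet_adj]
      constructor
      · rintro ⟨hmem, hxy⟩
        have hmem' : s(x, y) ∈ X := hmem
        exact ⟨s(x, y), hmem', Sym2.eq_iff.1 (hab s(x, y))⟩
      · rintro ⟨i, hiX, hcase⟩
        have hie : i = s(x, y) := huniq i x y hcase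
        have hiE : i ∈ E := (hmemE i).2 (hX hiX)
        have hxy : x ≠ y := by
          rcases hcase with ⟨h1, h2⟩ | ⟨h1, h2⟩
          · exact fun h => hne i hiE (by rw [h1, h2, h])
          · exact fun h => hne i hiE (by rw [h1, h2, h])
        exact ⟨hie ▸ hiX, hxy⟩
    constructor
    · rintro ⟨h1, h2⟩
      refine ⟨hsub_iff.1 h1, fun w hw => ?_⟩
      exact ReflTransGen.mono
        (fun x y h' => (hadj_iff h1 x y).1 h') _ _ ((SimpleGraph.reachable_iff_reflTransGen _ _).1 (h2 w hw))
    · rintro ⟨h1, h2⟩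
      have hX : (↑X : Set (Sym2 V)) ⊆ G.edgeSet := hsub_iff.2 h1
      refine ⟨hX, fun w hw => ?_⟩
      exact (SimpleGraph.reachable_iff_reflTransGen _ _).2
        (ReflTransGen.mono (fun x y h' => (hadj_iff hX x y).2 h') _ _ (h2 w hw))
  rw [stepA, stepB]
  exact general_count E.card E rfl a b W s
end
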